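/- Let n, i, j be integers with i ≥ j ≥ 0, i + j ≤ n and i + j ≡ n (mod 2). Then the number of pairs (P,Q) of lattice paths of length n satisfying −P ≤ Q ≤ P, h(P) = i + j and h(Q) = i − j equals the number of pairs (P,Q) of lattice paths of length n satisfying Q ≤ P, P ≥ 0, Q ≥ 0 and i − j ≤ h(Q) ≤ i + j ≤ h(P). -/

import Mathlib

/-- A lattice path of length `n`: each step is `+1` (U) or `-1` (D). -/
def IsPath {n : ℕ} (P : Fin n → ℤ) : Prop := ∀ l, P l = 1 ∨ P l = -1

/-- Height of the path `P` at `x = a`: sum of the first `a` steps. -/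
def ht {n : ℕ} (P : Fin n → ℤ) (a : ℕ) : ℤ :=
  ∑ l ∈ Finset.univ.filter (fun l : Fin n => (l : ℕ) < a), P l

def WB (R : ℤ → ℤ → Bool) : ℕ → ℤ → ℤ → ℕ
  | 0, x, y => if x = 0 ∧ y = 0 then 1 else 0
  | n+1, x, y => if R x y then
      WB R n (x-1) (y-1) + WB R n (x-1) (y+1) + WB R n (x+1) (y-1) + WB R n (x+1) (y+1) else 0

def Reg1 (x y : ℤ) : Bool := decide (-x ≤ y ∧ y ≤ x)
def Reg2 (x y : ℤ) : Bool := decide (0 ≤ y ∧ y ≤ x)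

noncomputable def box (n : ℕ) : Finset (ℤ × ℤ) := Finset.Icc (-(n:ℤ)) n ×ˢ Finset.Icc (-(n:ℤ)) n

noncomputable def S2 (n : ℕ) (p q : ℤ) : ℕ :=
  ∑ z ∈ box n, if p ≤ z.2 ∧ z.2 ≤ q ∧ q ≤ z.1 then WB Reg2 n z.1 z.2 else 0

lemma mem_box {n : ℕ} {z : ℤ × ℤ} :
    z ∈ box n ↔ -(n:ℤ) ≤ z.1 ∧ z.1 ≤ n ∧ -(n:ℤ) ≤ z.2 ∧ z.2 ≤ n := by
  simp [box, Finset.mem_Icc]; tauto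

lemma WB_bound {R : ℤ → ℤ → Bool} : ∀ {n : ℕ} {x y : ℤ}, WB R n x y ≠ 0 →
    -(n:ℤ) ≤ x ∧ x ≤ n ∧ -(n:ℤ) ≤ y ∧ y ≤ n ∧ x % 2 = (n:ℤ) % 2 ∧ y % 2 = (n:ℤ) % 2 := by
  intro n
  induction n with
  | zero => intro x y h; simp [WB] at h; simp [h]
  | succ n ih =>
    intro x y h
    rw [WB] at h
    by_cases hr : R x y
    · rw [if_pos hr] at h
      have : WB R n (x-1) (y-1) ≠ 0 ∨ WB R n (x-1) (y+1) ≠ 0 ∨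
          WB R n (x+1) (y-1) ≠ 0 ∨ WB R n (x+1) (y+1) ≠ 0 := by omega
      push_cast
      rcases this with h1 | h1 | h1 | h1 <;> have := ih h1 <;> push_cast at this <;> omega
    · rw [if_neg hr] at h; omega

lemma WB2_region {n : ℕ} {x y : ℤ} (h : WB Reg2 n x y ≠ 0) : 0 ≤ y ∧ y ≤ x := by
  cases n with
  | zero => simp [WB] at h; omega
  | succ n =>
    rw [WB] at h
    by_cases hr : Reg2 x y
    · simpa [Reg2] using hr
    · simp [if_neg hr] at h

lemma WB1_out {n : ℕ} {x y : ℤ} (h : ¬ (-x ≤ y ∧ y ≤ x)) : WB Reg1 n x y = 0 := by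
  cases n with
  | zero => simp [WB]; omega
  | succ n => rw [WB, if_neg (by simpa [Reg1] using h)]

lemma WB1_symm : ∀ (n : ℕ) (x y : ℤ), WB Reg1 n x (-y) = WB Reg1 n x y := by
  intro n
  induction n with
  | zero => intro x y; simp [WB, neg_eq_zero]
  | succ n ih =>
    intro x y
    rw [WB, WB]
    have hr : Reg1 x (-y) = Reg1 x y := by
      simp only [Reg1]; rw [decide_eq_decide]; omega
    rw [hr]
    have e1 : -y - 1 = -(y+1) := by ring
    have e2 : -y + 1 = -(y-1) := by ring
    rw [e1, e2, ih, ih, ih, ih]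
    ring

lemma sum_shift (n : ℕ) (d : ℤ × ℤ) (hd1 : |d.1| ≤ 1) (hd2 : |d.2| ≤ 1)
    (F : ℤ × ℤ → ℕ)
    (hF : ∀ w, F w ≠ 0 → -(n:ℤ) ≤ w.1 ∧ w.1 ≤ n ∧ -(n:ℤ) ≤ w.2 ∧ w.2 ≤ n) :
    ∑ z ∈ box (n+1), F (z + d) = ∑ w ∈ box n, F w := by
  have emb : ℤ × ℤ ↪ ℤ × ℤ := ⟨fun z => z + d, add_left_injective d⟩
  have h1 : ∑ w ∈ (box (n+1)).map ⟨fun z => z + d, add_left_injective d⟩, F w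
      = ∑ z ∈ box (n+1), F (z + d) := by
    rw [Finset.sum_map]; rfl
  rw [← h1]
  apply (Finset.sum_subset ?_ ?_).symm
  · intro w hw
    rw [Finset.mem_map]
    refine ⟨w - d, ?_, by simp⟩
    rw [mem_box] at hw ⊢
    obtain ⟨h1, h2⟩ := abs_le.mp hd1
    obtain ⟨h3, h4⟩ := abs_le.mp hd2
    push_cast
    simp only [Prod.fst_sub, Prod.snd_sub]
    omega
  · intro w _ hw
    by_contra hne
    have := hF w hne
    apply hw
    rw [mem_box]
    exact this

lemma shift_cone (n : ℕ) (p q e f : ℤ) (he : |e| ≤ 1) (hf : |f| ≤ 1) :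
    (∑ z ∈ box (n+1), if p ≤ z.2 ∧ z.2 ≤ q ∧ q ≤ z.1 then WB Reg2 n (z.1 - e) (z.2 - f) else 0)
    = ∑ w ∈ box n, if p ≤ w.2 + f ∧ w.2 + f ≤ q ∧ q ≤ w.1 + e then WB Reg2 n w.1 w.2 else 0 := by
  have key := sum_shift n ((-e, -f)) (by simpa using he) (by simpa using hf)
    (fun w => if p ≤ w.2 + f ∧ w.2 + f ≤ q ∧ q ≤ w.1 + e then WB Reg2 n w.1 w.2 else 0) ?_
  · rw [← key]
    apply Finset.sum_congr rfl
    intro z _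
    show _ = if p ≤ (z + ((-e,-f) : ℤ × ℤ)).2 + f ∧ _ ∧ q ≤ (z + ((-e,-f) : ℤ × ℤ)).1 + e
        then WB Reg2 n (z + ((-e,-f) : ℤ × ℤ)).1 (z + ((-e,-f) : ℤ × ℤ)).2 else 0
    simp only [Prod.fst_add, Prod.snd_add]
    apply if_congr
    · constructor <;> (intro h; omega)
    · congr 1 <;> ring
    · rfl
  · intro w hw
    have : WB Reg2 n w.1 w.2 ≠ 0 := by
      by_contra hzero
      simp [hzero] at hw
    have := WB_bound this
    omega

lemma S2_empty (n : ℕ) {p q : ℤ} (h : q < p) : S2 n p q = 0 := by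
  apply Finset.sum_eq_zero
  intro z _
  rw [if_neg]
  omega

lemma S2_succ (n : ℕ) (p q : ℤ) (hp : 0 ≤ p) (hpq : p ≤ q) :
    S2 (n+1) p q =
      ∑ w ∈ box n,
        ((if p ≤ w.2 + 1 ∧ w.2 + 1 ≤ q ∧ q ≤ w.1 + 1 then WB Reg2 n w.1 w.2 else 0)
        + (if p ≤ w.2 - 1 ∧ w.2 - 1 ≤ q ∧ q ≤ w.1 + 1 then WB Reg2 n w.1 w.2 else 0)
        + (if p ≤ w.2 + 1 ∧ w.2 + 1 ≤ q ∧ q ≤ w.1 - 1 then WB Reg2 n w.1 w.2 else 0)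
        + (if p ≤ w.2 - 1 ∧ w.2 - 1 ≤ q ∧ q ≤ w.1 - 1 then WB Reg2 n w.1 w.2 else 0)) := by
  have step1 : ∀ z ∈ box (n+1),
      (if p ≤ z.2 ∧ z.2 ≤ q ∧ q ≤ z.1 then WB Reg2 (n+1) z.1 z.2 else 0) =
      (if p ≤ z.2 ∧ z.2 ≤ q ∧ q ≤ z.1 then WB Reg2 n (z.1 - 1) (z.2 - 1) else 0)
      + (if p ≤ z.2 ∧ z.2 ≤ q ∧ q ≤ z.1 then WB Reg2 n (z.1 - 1) (z.2 - (-1)) else 0)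
      + (if p ≤ z.2 ∧ z.2 ≤ q ∧ q ≤ z.1 then WB Reg2 n (z.1 - (-1)) (z.2 - 1) else 0)
      + (if p ≤ z.2 ∧ z.2 ≤ q ∧ q ≤ z.1 then WB Reg2 n (z.1 - (-1)) (z.2 - (-1)) else 0) := by
    intro z _
    by_cases h : p ≤ z.2 ∧ z.2 ≤ q ∧ q ≤ z.1
    · simp only [if_pos h]
      rw [WB, if_pos (by simp [Reg2]; omega)]
      norm_num
    · simp [if_neg h]
  rw [S2, Finset.sum_congr rfl step1, Finset.sum_add_distrib, Finset.sum_add_distrib,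
    Finset.sum_add_distrib]
  rw [shift_cone n p q 1 1 (by norm_num) (by norm_num),
    shift_cone n p q 1 (-1) (by norm_num) (by norm_num),
    shift_cone n p q (-1) 1 (by norm_num) (by norm_num),
    shift_cone n p q (-1) (-1) (by norm_num) (by norm_num)]
  rw [← Finset.sum_add_distrib, ← Finset.sum_add_distrib, ← Finset.sum_add_distrib]
  apply Finset.sum_congr rfl
  intro w _
  have e1 : w.2 + -1 = w.2 - 1 := by ring
  have e2 : w.1 + -1 = w.1 - 1 := by ring
  rw [e1, e2]

lemma key_pos (p q x y : ℤ) (c : ℕ) (hp : 1 ≤ p) (hpq : p ≤ q) (hpar : p % 2 = q % 2)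
    (hy : 0 ≤ y) (hyx : y ≤ x) (hxy : x % 2 = y % 2) (hxq : ¬ x % 2 = q % 2) :
    ((if p ≤ y + 1 ∧ y + 1 ≤ q ∧ q ≤ x + 1 then c else 0)
    + (if p ≤ y - 1 ∧ y - 1 ≤ q ∧ q ≤ x + 1 then c else 0)
    + (if p ≤ y + 1 ∧ y + 1 ≤ q ∧ q ≤ x - 1 then c else 0)
    + (if p ≤ y - 1 ∧ y - 1 ≤ q ∧ q ≤ x - 1 then c else 0))
    = ((if p - 1 ≤ y ∧ y ≤ q - 1 ∧ q - 1 ≤ x then c else 0)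
    + (if p + 1 ≤ y ∧ y ≤ q - 1 ∧ q - 1 ≤ x then c else 0)
    + (if p - 1 ≤ y ∧ y ≤ q + 1 ∧ q + 1 ≤ x then c else 0)
    + (if p + 1 ≤ y ∧ y ≤ q + 1 ∧ q + 1 ≤ x then c else 0)) := by
  split_ifs <;> omega

lemma key_zero (q x y : ℤ) (c : ℕ) (hq : q % 2 = 0)
    (hy : 0 ≤ y) (hyx : y ≤ x) (hxy : x % 2 = y % 2) (hxq : ¬ x % 2 = q % 2) :
    ((if (0:ℤ) ≤ y + 1 ∧ y + 1 ≤ q ∧ q ≤ x + 1 then c else 0)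
    + (if (0:ℤ) ≤ y - 1 ∧ y - 1 ≤ q ∧ q ≤ x + 1 then c else 0)
    + (if (0:ℤ) ≤ y + 1 ∧ y + 1 ≤ q ∧ q ≤ x - 1 then c else 0)
    + (if (0:ℤ) ≤ y - 1 ∧ y - 1 ≤ q ∧ q ≤ x - 1 then c else 0))
    = ((if 1 ≤ y ∧ y ≤ q - 1 ∧ q - 1 ≤ x then c else 0)
    + (if 1 ≤ y ∧ y ≤ q - 1 ∧ q - 1 ≤ x then c else 0)
    + (if 1 ≤ y ∧ y ≤ q + 1 ∧ q + 1 ≤ x then c else 0)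
    + (if 1 ≤ y ∧ y ≤ q + 1 ∧ q + 1 ≤ x then c else 0)) := by
  split_ifs <;> omega

lemma main_identity : ∀ (n : ℕ) (p q : ℤ), 0 ≤ p → p ≤ q → p % 2 = q % 2 →
    q % 2 = (n : ℤ) % 2 → WB Reg1 n q p = S2 n p q := by
  intro n
  induction n with
  | zero =>
    intro p q hp hpq hpar hq
    have hb : box 0 = {((0:ℤ), (0:ℤ))} := by
      ext z
      simp [mem_box, Prod.ext_iff]
      omega
    rw [WB, S2, hb, Finset.sum_singleton]
    simp only [WB]
    norm_num
    split_ifs <;> omega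
  | succ n ih =>
    intro p q hp hpq hpar hq
    rw [WB, if_pos (show (Reg1 q p : Prop) by simp [Reg1]; omega)]
    rcases eq_or_lt_of_le hp with hp0 | hp1
    · -- p = 0
      subst hp0
      simp only [zero_sub, zero_add]
      have hsym1 : WB Reg1 n (q - 1) (-1) = WB Reg1 n (q - 1) 1 := WB1_symm n (q-1) 1
      have hsym2 : WB Reg1 n (q + 1) (-1) = WB Reg1 n (q + 1) 1 := WB1_symm n (q+1) 1
      rw [hsym1, hsym2]
      have hqe : q % 2 = 0 := by omega
      have h2 : WB Reg1 n (q - 1) 1 = S2 n 1 (q - 1) := by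
        by_cases hq2 : 2 ≤ q
        · exact ih 1 (q-1) (by omega) (by omega) (by omega) (by push_cast at hq ⊢; omega)
        · have hq0 : q = 0 := by omega
          rw [hq0]
          norm_num
          rw [WB1_out (by omega), S2_empty n (by omega)]
      have h4 : WB Reg1 n (q + 1) 1 = S2 n 1 (q + 1) :=
        ih 1 (q+1) (by omega) (by omega) (by omega) (by push_cast at hq ⊢; omega)
      rw [h2, h4, S2_succ n 0 q le_rfl (by omega)]
      simp only [S2]
      rw [← Finset.sum_add_distrib, ← Finset.sum_add_distrib, ← Finset.sum_add_distrib]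
      apply Finset.sum_congr rfl
      intro w _
      by_cases hc : WB Reg2 n w.1 w.2 = 0
      · simp [hc]
      · have hreg := WB2_region hc
        have hbd := WB_bound hc
        exact (key_zero q w.1 w.2 _ hqe hreg.1 hreg.2 (by omega)
          (by push_cast at hq hbd ⊢; omega)).symm
    · -- 1 ≤ p
      have h1 : WB Reg1 n (q - 1) (p - 1) = S2 n (p - 1) (q - 1) :=
        ih (p-1) (q-1) (by omega) (by omega) (by omega) (by push_cast at hq ⊢; omega)
      have h2 : WB Reg1 n (q - 1) (p + 1) = S2 n (p + 1) (q - 1) := by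
        by_cases hpq2 : p + 1 ≤ q - 1
        · exact ih (p+1) (q-1) (by omega) (by omega) (by omega) (by push_cast at hq ⊢; omega)
        · rw [WB1_out (by omega), S2_empty n (by omega)]
      have h3 : WB Reg1 n (q + 1) (p - 1) = S2 n (p - 1) (q + 1) :=
        ih (p-1) (q+1) (by omega) (by omega) (by omega) (by push_cast at hq ⊢; omega)
      have h4 : WB Reg1 n (q + 1) (p + 1) = S2 n (p + 1) (q + 1) :=
        ih (p+1) (q+1) (by omega) (by omega) (by omega) (by push_cast at hq ⊢; omega)
      rw [h1, h2, h3, h4, S2_succ n p q hp hpq]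
      simp only [S2]
      rw [← Finset.sum_add_distrib, ← Finset.sum_add_distrib, ← Finset.sum_add_distrib]
      apply Finset.sum_congr rfl
      intro w _
      by_cases hc : WB Reg2 n w.1 w.2 = 0
      · simp [hc]
      · have hreg := WB2_region hc
        have hbd := WB_bound hc
        exact (key_pos p q w.1 w.2 _ hp1 hpq hpar hreg.1 hreg.2 (by omega)
          (by push_cast at hq hbd ⊢; omega)).symm

lemma ht_snoc {n : ℕ} (P : Fin n → ℤ) (s : ℤ) {a : ℕ} (ha : a ≤ n) :
    ht (Fin.snoc P s) a = ht P a := by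
  rw [ht, ht, Finset.sum_filter, Finset.sum_filter, Fin.sum_univ_castSucc]
  simp only [Fin.snoc_castSucc, Fin.coe_castSucc, Fin.val_last]
  rw [if_neg (by omega)]
  rw [add_zero]

lemma ht_snoc_top {n : ℕ} (P : Fin n → ℤ) (s : ℤ) :
    ht (Fin.snoc P s) (n + 1) = ht P n + s := by
  rw [ht, ht, Finset.sum_filter, Finset.sum_filter, Fin.sum_univ_castSucc]
  simp only [Fin.snoc_castSucc, Fin.coe_castSucc, Fin.val_last, Fin.snoc_last]
  rw [if_pos (by omega)]
  congr 1
  apply Finset.sum_congr rfl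
  intro l _
  rw [if_pos (by omega), if_pos (by omega)]

lemma nat_card_sigma {ι : Type*} [Fintype ι] (f : ι → Type*) [∀ i, Finite (f i)] :
    Nat.card (Σ i, f i) = ∑ i, Nat.card (f i) := by
  letI : ∀ i, Fintype (f i) := fun i => Fintype.ofFinite _
  rw [Nat.card_eq_fintype_card, Fintype.card_sigma]
  exact Finset.sum_congr rfl fun i _ => (Nat.card_eq_fintype_card).symm

lemma finite_sub {n : ℕ} (C : (Fin n → ℤ) × (Fin n → ℤ) → Prop)
    (hC : ∀ PQ, C PQ → IsPath PQ.1 ∧ IsPath PQ.2) : Finite {PQ // C PQ} := by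
  apply Finite.of_injective (β := (Fin n → Bool) × (Fin n → Bool))
    (fun t => (fun l => decide (t.val.1 l = 1), fun l => decide (t.val.2 l = 1)))
  intro t t' h
  rw [Prod.mk.injEq] at h
  apply Subtype.ext
  apply Prod.ext
  · funext l
    have h1 := congrFun h.1 l
    rw [decide_eq_decide] at h1
    rcases (hC _ t.2).1 l with e | e <;> rcases (hC _ t'.2).1 l with e' | e' <;>
      rw [e, e'] <;> first | rfl | (exfalso; omega) |
        (exfalso; rw [e, e'] at h1; omega)
  · funext l
    have h1 := congrFun h.2 l
    rw [decide_eq_decide] at h1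
    rcases (hC _ t.2).2 l with e | e <;> rcases (hC _ t'.2).2 l with e' | e' <;>
      rw [e, e'] <;> first | rfl | (exfalso; omega) |
        (exfalso; rw [e, e'] at h1; omega)

lemma ht_init {n : ℕ} (P : Fin (n+1) → ℤ) {a : ℕ} (ha : a ≤ n) :
    ht (Fin.init P) a = ht P a := by
  conv_rhs => rw [← Fin.snoc_init_self P]
  rw [ht_snoc _ _ ha]

lemma ht_init_top {n : ℕ} (P : Fin (n+1) → ℤ) :
    ht P (n+1) = ht (Fin.init P) n + P (Fin.last n) := by
  conv_lhs => rw [← Fin.snoc_init_self P]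
  rw [ht_snoc_top]

def stp : Bool → ℤ
  | true => 1
  | false => -1

lemma stp_or (b : Bool) : stp b = 1 ∨ stp b = -1 := by cases b <;> simp [stp]

lemma isPath'_snoc {n : ℕ} {P : Fin n → ℤ} (h : IsPath P) {s : ℤ} (hs : s = 1 ∨ s = -1) :
    IsPath (Fin.snoc P s) := by
  intro l
  rcases Fin.eq_castSucc_or_eq_last l with ⟨i, rfl⟩ | rfl
  · rw [Fin.snoc_castSucc]; exact h i
  · rw [Fin.snoc_last]; exact hs

def Esh (E R : ℤ → ℤ → Bool) (s : Bool × Bool) (x y : ℤ) : Bool :=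
  E (x + stp s.1) (y + stp s.2) && R (x + stp s.1) (y + stp s.2)

lemma shift_gen (R : ℤ → ℤ → Bool) (n : ℕ) (C : ℤ × ℤ → Prop) [DecidablePred C]
    (e f : ℤ) (he : |e| ≤ 1) (hf : |f| ≤ 1) :
    (∑ z ∈ box (n+1), if C z then WB R n (z.1 - e) (z.2 - f) else 0)
    = ∑ w ∈ box n, if C (w.1 + e, w.2 + f) then WB R n w.1 w.2 else 0 := by
  have key := sum_shift n ((-e, -f)) (by simpa using he) (by simpa using hf)
    (fun w => if C (w.1 + e, w.2 + f) then WB R n w.1 w.2 else 0) ?_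
  · rw [← key]
    apply Finset.sum_congr rfl
    intro z _
    show _ = if C ((z + ((-e, -f) : ℤ × ℤ)).1 + e, (z + ((-e, -f) : ℤ × ℤ)).2 + f)
        then WB R n (z + ((-e, -f) : ℤ × ℤ)).1 (z + ((-e, -f) : ℤ × ℤ)).2 else 0
    simp only [Prod.fst_add, Prod.snd_add]
    have hz : (z.1 + -e + e, z.2 + -f + f) = z := by
      obtain ⟨z1, z2⟩ := z
      simp only [Prod.mk.injEq]
      constructor <;> ring
    rw [hz]
    apply if_congr Iff.rfl _ rfl
    congr 1 <;> ring
  · intro w hw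
    have hW : WB R n w.1 w.2 ≠ 0 := by
      by_contra hzero
      simp [hzero] at hw
    have := WB_bound hW
    omega

lemma card_lemma (R : ℤ → ℤ → Bool) (hR : R 0 0 = true) :
    ∀ (n : ℕ) (E : ℤ → ℤ → Bool),
    Nat.card {PQ : (Fin n → ℤ) × (Fin n → ℤ) //
      IsPath PQ.1 ∧ IsPath PQ.2 ∧ (∀ a ≤ n, R (ht PQ.1 a) (ht PQ.2 a) = true) ∧
      E (ht PQ.1 n) (ht PQ.2 n) = true} =
    ∑ z ∈ box n, if E z.1 z.2 then WB R n z.1 z.2 else 0 := by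
  intro n
  induction n with
  | zero =>
    intro E
    have hht : ∀ (P : Fin 0 → ℤ) (a : ℕ), ht P a = 0 := by
      intro P a
      rw [ht]
      simp
    have hb : box 0 = {((0:ℤ), (0:ℤ))} := by
      ext z
      simp [mem_box, Prod.ext_iff]
      omega
    rw [hb, Finset.sum_singleton]
    have hWB : WB R 0 0 0 = 1 := by rw [WB]; norm_num
    by_cases hE : E 0 0 = true
    · rw [if_pos hE, hWB, Nat.card_eq_one_iff_unique]
      constructor
      · exact ⟨fun a b => Subtype.ext (Subsingleton.elim _ _)⟩
      · refine ⟨⟨(fun l => l.elim0, fun l => l.elim0), fun l => l.elim0, fun l => l.elim0,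
          fun a _ => ?_, ?_⟩⟩ <;> assumption
    · rw [if_neg hE]
      have : IsEmpty {PQ : (Fin 0 → ℤ) × (Fin 0 → ℤ) //
          IsPath PQ.1 ∧ IsPath PQ.2 ∧ (∀ a ≤ 0, R (ht PQ.1 a) (ht PQ.2 a) = true) ∧
          E (ht PQ.1 0) (ht PQ.2 0) = true} := by
        constructor
        rintro ⟨PQ, -, -, -, hend⟩
        rw [hht, hht] at hend
        exact hE hend
      exact Nat.card_of_isEmpty
  | succ n ih =>
    intro E
    haveI hfin : ∀ s : Bool × Bool, Finite {PQ : (Fin n → ℤ) × (Fin n → ℤ) //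
        IsPath PQ.1 ∧ IsPath PQ.2 ∧ (∀ a ≤ n, R (ht PQ.1 a) (ht PQ.2 a) = true) ∧
        Esh E R s (ht PQ.1 n) (ht PQ.2 n) = true} :=
      fun s => finite_sub _ (fun PQ h => ⟨h.1, h.2.1⟩)
    have props : ∀ (s : Bool × Bool) (u : {PQ : (Fin n → ℤ) × (Fin n → ℤ) //
        IsPath PQ.1 ∧ IsPath PQ.2 ∧ (∀ a ≤ n, R (ht PQ.1 a) (ht PQ.2 a) = true) ∧
        Esh E R s (ht PQ.1 n) (ht PQ.2 n) = true}),
        IsPath (Fin.snoc u.val.1 (stp s.1)) ∧ IsPath (Fin.snoc u.val.2 (stp s.2)) ∧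
        (∀ a ≤ n + 1, R (ht (Fin.snoc u.val.1 (stp s.1)) a)
          (ht (Fin.snoc u.val.2 (stp s.2)) a) = true) ∧
        E (ht (Fin.snoc u.val.1 (stp s.1)) (n+1))
          (ht (Fin.snoc u.val.2 (stp s.2)) (n+1)) = true := by
      rintro s ⟨⟨P, Q⟩, hP1, hP2, hreg, hend⟩
      simp only [Esh, Bool.and_eq_true] at hend
      refine ⟨isPath'_snoc hP1 (stp_or _), isPath'_snoc hP2 (stp_or _), ?_, ?_⟩
      · intro a ha
        rcases eq_or_lt_of_le ha with rfl | hlt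
        · rw [ht_snoc_top, ht_snoc_top]
          exact hend.2
        · have ha' : a ≤ n := by omega
          rw [ht_snoc P _ ha', ht_snoc Q _ ha']
          exact hreg a ha'
      · rw [ht_snoc_top, ht_snoc_top]
        exact hend.1
    set g : (Σ s : Bool × Bool, {PQ : (Fin n → ℤ) × (Fin n → ℤ) //
        IsPath PQ.1 ∧ IsPath PQ.2 ∧ (∀ a ≤ n, R (ht PQ.1 a) (ht PQ.2 a) = true) ∧
        Esh E R s (ht PQ.1 n) (ht PQ.2 n) = true}) →
        {PQ : (Fin (n+1) → ℤ) × (Fin (n+1) → ℤ) //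
        IsPath PQ.1 ∧ IsPath PQ.2 ∧ (∀ a ≤ n + 1, R (ht PQ.1 a) (ht PQ.2 a) = true) ∧
        E (ht PQ.1 (n+1)) (ht PQ.2 (n+1)) = true} :=
      fun t => ⟨(Fin.snoc t.2.val.1 (stp t.1.1), Fin.snoc t.2.val.2 (stp t.1.2)),
        props t.1 t.2⟩ with hg
    have hbij : Function.Bijective g := by
      constructor
      · rintro ⟨⟨b1, b2⟩, ⟨⟨P, Q⟩, hu⟩⟩ ⟨⟨b1', b2'⟩, ⟨⟨P', Q'⟩, hu'⟩⟩ h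
        simp only [hg, Subtype.mk.injEq, Prod.mk.injEq] at h
        obtain ⟨h1, h2⟩ := h
        have eP : P = P' := by
          have := congrArg Fin.init h1
          rwa [Fin.init_snoc, Fin.init_snoc] at this
        have eQ : Q = Q' := by
          have := congrArg Fin.init h2
          rwa [Fin.init_snoc, Fin.init_snoc] at this
        have eb1 : b1 = b1' := by
          have := congrFun h1 (Fin.last n)
          rw [Fin.snoc_last, Fin.snoc_last] at this
          cases b1 <;> cases b1' <;> first | rfl | (exfalso; simp [stp] at this)
        have eb2 : b2 = b2' := by
          have := congrFun h2 (Fin.last n)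
          rw [Fin.snoc_last, Fin.snoc_last] at this
          cases b2 <;> cases b2' <;> first | rfl | (exfalso; simp [stp] at this)
        subst eP; subst eQ; subst eb1; subst eb2; rfl
      · rintro ⟨⟨P, Q⟩, hP1, hP2, hreg, hend⟩
        dsimp only at hP1 hP2 hreg hend
        have hc1 : stp (decide (P (Fin.last n) = 1)) = P (Fin.last n) := by
          rcases hP1 (Fin.last n) with e | e
          · rw [decide_eq_true e, e]; rfl
          · rw [decide_eq_false (by rw [e]; decide), e]; rfl
        have hc2 : stp (decide (Q (Fin.last n) = 1)) = Q (Fin.last n) := by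
          rcases hP2 (Fin.last n) with e | e
          · rw [decide_eq_true e, e]; rfl
          · rw [decide_eq_false (by rw [e]; decide), e]; rfl
        refine ⟨⟨(decide (P (Fin.last n) = 1), decide (Q (Fin.last n) = 1)),
          ⟨(Fin.init P, Fin.init Q), ?_, ?_, ?_, ?_⟩⟩, ?_⟩
        · exact fun l => hP1 l.castSucc
        · exact fun l => hP2 l.castSucc
        · intro a ha
          rw [ht_init P ha, ht_init Q ha]
          exact hreg a (by omega)
        · simp only [Esh, Bool.and_eq_true]
          rw [hc1, hc2, ← ht_init_top P, ← ht_init_top Q]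
          exact ⟨hend, hreg (n+1) le_rfl⟩
        · apply Subtype.ext
          simp only [hg]
          rw [Prod.mk.injEq]
          constructor
          · rw [hc1]; exact Fin.snoc_init_self P
          · rw [hc2]; exact Fin.snoc_init_self Q
    have h0 := Nat.card_eq_of_bijective g hbij
    rw [← h0, nat_card_sigma]
    rw [Finset.sum_congr rfl (fun (s : Bool × Bool) _ => ih (Esh E R s))]
    -- RHS transformation
    have step1 : ∀ z ∈ box (n+1), (if E z.1 z.2 = true then WB R (n+1) z.1 z.2 else 0) =
        (if (E z.1 z.2 && R z.1 z.2) = true then WB R n (z.1 - 1) (z.2 - 1) else 0)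
      + (if (E z.1 z.2 && R z.1 z.2) = true then WB R n (z.1 - 1) (z.2 - (-1)) else 0)
      + (if (E z.1 z.2 && R z.1 z.2) = true then WB R n (z.1 - (-1)) (z.2 - 1) else 0)
      + (if (E z.1 z.2 && R z.1 z.2) = true then WB R n (z.1 - (-1)) (z.2 - (-1)) else 0) := by
      intro z _
      have e1 : z.1 - (-1) = z.1 + 1 := by ring
      have e2 : z.2 - (-1) = z.2 + 1 := by ring
      rw [e1, e2]
      by_cases hEz : E z.1 z.2 = true
      · by_cases hRz : R z.1 z.2 = true
        · have hc : (E z.1 z.2 && R z.1 z.2) = true := by rw [hEz, hRz]; rfl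
          rw [if_pos hEz, WB, if_pos hRz, if_pos hc, if_pos hc, if_pos hc, if_pos hc]
        · have hc : ¬ ((E z.1 z.2 && R z.1 z.2) = true) := by
            simp [Bool.and_eq_true, hRz]
          rw [if_pos hEz, WB, if_neg hRz, if_neg hc, if_neg hc, if_neg hc, if_neg hc]
      · have hc : ¬ ((E z.1 z.2 && R z.1 z.2) = true) := by
          simp [Bool.and_eq_true, hEz]
        rw [if_neg hEz, if_neg hc, if_neg hc, if_neg hc, if_neg hc]
    rw [Finset.sum_congr rfl step1, Finset.sum_add_distrib, Finset.sum_add_distrib,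
      Finset.sum_add_distrib]
    rw [shift_gen R n (fun z => (E z.1 z.2 && R z.1 z.2) = true) 1 1 (by norm_num) (by norm_num),
      shift_gen R n (fun z => (E z.1 z.2 && R z.1 z.2) = true) 1 (-1) (by norm_num) (by norm_num),
      shift_gen R n (fun z => (E z.1 z.2 && R z.1 z.2) = true) (-1) 1 (by norm_num) (by norm_num),
      shift_gen R n (fun z => (E z.1 z.2 && R z.1 z.2) = true) (-1) (-1) (by norm_num) (by norm_num)]
    rw [Fintype.sum_prod_type, Fintype.sum_bool]
    rw [Fintype.sum_bool, Fintype.sum_bool]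
    simp only [Esh, stp]
    ring

theorem stmt0 (n : ℕ) (i j : ℤ) (hj : 0 ≤ j) (hij : j ≤ i) (hn : i + j ≤ (n : ℤ))
    (hpar : (i + j) % 2 = (n : ℤ) % 2) :
    Nat.card {PQ : (Fin n → ℤ) × (Fin n → ℤ) //
      IsPath PQ.1 ∧ IsPath PQ.2 ∧
      (∀ a ≤ n, -ht PQ.1 a ≤ ht PQ.2 a ∧ ht PQ.2 a ≤ ht PQ.1 a) ∧
      ht PQ.1 n = i + j ∧ ht PQ.2 n = i - j} =
    Nat.card {PQ : (Fin n → ℤ) × (Fin n → ℤ) //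
      IsPath PQ.1 ∧ IsPath PQ.2 ∧
      (∀ a ≤ n, ht PQ.2 a ≤ ht PQ.1 a) ∧
      (∀ a ≤ n, 0 ≤ ht PQ.1 a) ∧ (∀ a ≤ n, 0 ≤ ht PQ.2 a) ∧
      i - j ≤ ht PQ.2 n ∧ ht PQ.2 n ≤ i + j ∧ i + j ≤ ht PQ.1 n} := by
  have h1 : Nat.card {PQ : (Fin n → ℤ) × (Fin n → ℤ) //
      IsPath PQ.1 ∧ IsPath PQ.2 ∧
      (∀ a ≤ n, -ht PQ.1 a ≤ ht PQ.2 a ∧ ht PQ.2 a ≤ ht PQ.1 a) ∧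
      ht PQ.1 n = i + j ∧ ht PQ.2 n = i - j} =
      ∑ z ∈ box n, if (decide (z.1 = i + j) && decide (z.2 = i - j)) = true
        then WB Reg1 n z.1 z.2 else 0 := by
    rw [← card_lemma Reg1 (by simp [Reg1]) n
      (fun x y => decide (x = i + j) && decide (y = i - j))]
    apply Nat.card_congr
    apply Equiv.subtypeEquivRight
    intro PQ
    simp only [Reg1, Bool.and_eq_true, decide_eq_true_eq]
  have h2 : Nat.card {PQ : (Fin n → ℤ) × (Fin n → ℤ) //
      IsPath PQ.1 ∧ IsPath PQ.2 ∧
      (∀ a ≤ n, ht PQ.2 a ≤ ht PQ.1 a) ∧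
      (∀ a ≤ n, 0 ≤ ht PQ.1 a) ∧ (∀ a ≤ n, 0 ≤ ht PQ.2 a) ∧
      i - j ≤ ht PQ.2 n ∧ ht PQ.2 n ≤ i + j ∧ i + j ≤ ht PQ.1 n} =
      ∑ z ∈ box n, if (decide (i - j ≤ z.2 ∧ z.2 ≤ i + j ∧ i + j ≤ z.1)) = true
        then WB Reg2 n z.1 z.2 else 0 := by
    rw [← card_lemma Reg2 (by simp [Reg2]) n
      (fun x y => decide (i - j ≤ y ∧ y ≤ i + j ∧ i + j ≤ x))]
    apply Nat.card_congr
    apply Equiv.subtypeEquivRight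
    intro PQ
    simp only [Reg2, decide_eq_true_eq]
    constructor
    · rintro ⟨p1, p2, hle, hp, hq, he⟩
      exact ⟨p1, p2, fun a ha => ⟨hq a ha, hle a ha⟩, he⟩
    · rintro ⟨p1, p2, hreg, he⟩
      exact ⟨p1, p2, fun a ha => (hreg a ha).2,
        fun a ha => le_trans (hreg a ha).1 (hreg a ha).2, fun a ha => (hreg a ha).1, he⟩
  rw [h1, h2]
  have h3 : (∑ z ∈ box n, if (decide (z.1 = i + j) && decide (z.2 = i - j)) = true
      then WB Reg1 n z.1 z.2 else 0) = WB Reg1 n (i + j) (i - j) := by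
    have hcongr : ∀ z ∈ box n, (if (decide (z.1 = i + j) && decide (z.2 = i - j)) = true
        then WB Reg1 n z.1 z.2 else 0) =
        (if z = ((i + j, i - j) : ℤ × ℤ) then WB Reg1 n z.1 z.2 else 0) := by
      intro z _
      apply if_congr _ rfl rfl
      simp [Prod.ext_iff]
    rw [Finset.sum_congr rfl hcongr, Finset.sum_ite_eq' (box n) ((i + j, i - j) : ℤ × ℤ)
      (fun z => WB Reg1 n z.1 z.2)]
    rw [if_pos]
    rw [mem_box]
    constructor
    · omega
    · exact ⟨hn, by omega, by omega⟩
  have h4 : (∑ z ∈ box n, if (decide (i - j ≤ z.2 ∧ z.2 ≤ i + j ∧ i + j ≤ z.1)) = true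
      then WB Reg2 n z.1 z.2 else 0) = S2 n (i - j) (i + j) := by
    rw [S2]
    apply Finset.sum_congr rfl
    intro z _
    apply if_congr _ rfl rfl
    simp
  rw [h3, h4]
  exact main_identity n (i - j) (i + j) (by omega) (by omega) (by omega) hpar
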